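/- Let x ∈ ℝⁿ with x ≠ 0, a ∈ ℝⁿ, and λ ≥ 0. Then the function t ↦ (1/2)‖a − t·x‖₂² + λ|t| on ℝ has a unique minimizer, given by t* = S(xᵀa, λ)/‖x‖₂². -/

import Mathlib

open BigOperators

/-- The shrinkage (soft-thresholding) function. -/
noncomputable def shrink (x lam : ℝ) : ℝ :=
  if x > lam then x - lam else if x < -lam then x + lam else 0

/-- Let x ∈ ℝⁿ with x ≠ 0, a ∈ ℝⁿ, and λ ≥ 0.  Then the
function t ↦ (1/2)‖a − t·x‖₂² + λ|t| on ℝ has a unique minimizer, given by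
t* = S(xᵀa, λ)/‖x‖₂². -/
theorem stmt_7 {n : ℕ} (x a : Fin n → ℝ) (hx : x ≠ 0)
    (lam : ℝ) (hlam : 0 ≤ lam)
    (φ : ℝ → ℝ)
    (hφ : ∀ t : ℝ, φ t = (1 / 2) * ∑ k, (a k - t * x k) ^ 2 + lam * |t|) :
    (∀ t : ℝ, φ (shrink (∑ k, x k * a k) lam / ∑ k, (x k) ^ 2) ≤ φ t) ∧
    (∀ t' : ℝ, (∀ t : ℝ, φ t' ≤ φ t) →
      t' = shrink (∑ k, x k * a k) lam / ∑ k, (x k) ^ 2) := by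
  set c := ∑ k, x k * a k with hc
  set s := ∑ k, (x k) ^ 2 with hs
  have hspos : 0 < s := by
    obtain ⟨k, hk⟩ := Function.ne_iff.mp hx
    exact Finset.sum_pos' (fun i _ => sq_nonneg _)
      ⟨k, Finset.mem_univ k, pow_two_pos_of_ne_zero hk⟩
  set T := shrink c lam / s with hT
  have hsum : ∀ t : ℝ, ∑ k, (a k - t * x k) ^ 2
      = (∑ k, (a k) ^ 2) - 2 * t * c + t ^ 2 * s := by
    intro t
    have h : ∀ k, (a k - t * x k) ^ 2
        = (a k) ^ 2 - 2 * t * (x k * a k) + t ^ 2 * (x k) ^ 2 := fun k => by ring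
    simp_rw [h, Finset.sum_add_distrib, Finset.sum_sub_distrib, ← Finset.mul_sum]
    rfl
  have key : ∀ t : ℝ, φ T + s / 2 * (t - T) ^ 2 ≤ φ t := by
    intro t
    rw [hφ, hφ, hsum, hsum]
    have h1 : lam * |T| + (c - s * T) * (t - T) ≤ lam * |t| := by
      have hTdef : T = shrink c lam / s := hT
      unfold shrink at hTdef
      split_ifs at hTdef with h1 h2
      · have hsT : s * T = c - lam := by rw [hTdef]; field_simp
        have hTnn : 0 ≤ T := by
          rw [hTdef]; exact div_nonneg (by linarith) hspos.le
        rw [abs_of_nonneg hTnn]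
        have h2 : lam * t ≤ lam * |t| := mul_le_mul_of_nonneg_left (le_abs_self t) hlam
        have h3 : lam * T + (c - s * T) * (t - T) = lam * t := by
          rw [show c - s * T = lam from by linarith]; ring
        linarith
      · have hsT : s * T = c + lam := by rw [hTdef]; field_simp
        have hTnp : T ≤ 0 := by
          rw [hTdef]
          exact div_nonpos_of_nonpos_of_nonneg (by linarith) hspos.le
        rw [abs_of_nonpos hTnp]
        have h3 : lam * -|t| ≤ lam * t := mul_le_mul_of_nonneg_left (neg_abs_le t) hlam
        have h4 : lam * -T + (c - s * T) * (t - T) = lam * -t := by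
          rw [show c - s * T = -lam from by linarith]; ring
        nlinarith
      · have hT0 : T = 0 := by rw [hTdef]; simp
        rw [hT0, abs_zero]
        have habs : |c| ≤ lam := abs_le.mpr ⟨by linarith, by linarith⟩
        have h2 : c * (t - 0) ≤ |c| * |t| := by
          calc c * (t - 0) ≤ |c * (t - 0)| := le_abs_self _
          _ = |c| * |t| := by rw [abs_mul, sub_zero]
        have h3 : |c| * |t| ≤ lam * |t| :=
          mul_le_mul_of_nonneg_right habs (abs_nonneg t)
        linarith
    nlinarith [h1]
  refine ⟨fun t => ?_, fun t' ht' => ?_⟩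
  · have := key t
    nlinarith [sq_nonneg (t - T), hspos]
  · have h := key t'
    have h2 := ht' T
    have h3 : (t' - T) ^ 2 ≤ 0 := by nlinarith
    have h4 : t' - T = 0 := by nlinarith [sq_nonneg (t' - T)]
    linarith
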